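/- For every natural number k there exists a polynomial P in one variable with nonnegative real coefficients (depending only on k) such that for all real numbers a, b, c, K with 0 ≤ a ≤ b, c ≥ 0, K ≥ 0 and max(c,a) > 0, one has ∫_a^b (max(c,x))^{−1} · (ln₊(K/x))^k dx ≤ P( ln₊( max(K,b) / max(c,a) ) ). -/

import Mathlib

set_option maxHeartbeats 1000000

open MeasureTheory

/-- The positive part of the logarithm: `ln₊ x = log (max x 1)`. -/
noncomputable def lnp (x : ℝ) : ℝ := Real.log (max x 1)

lemma lnp_nonneg (x : ℝ) : 0 ≤ lnp x := Real.log_nonneg (le_max_right _ _)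

lemma lnp_mono {x y : ℝ} (h : x ≤ y) : lnp x ≤ lnp y :=
  Real.log_le_log (lt_of_lt_of_le one_pos (le_max_right _ _)) (max_le_max h le_rfl)

lemma log_le_lnp {x : ℝ} (hx : 0 < x) : Real.log x ≤ lnp x :=
  Real.log_le_log hx (le_max_left _ _)

lemma lnp_mul_le {x y : ℝ} (hx : 0 ≤ x) (hy : 0 ≤ y) : lnp (x * y) ≤ lnp x + lnp y := by
  rcases le_or_gt (x * y) 1 with h | h
  · have : lnp (x * y) = 0 := by rw [lnp, max_eq_right h, Real.log_one]
    rw [this]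
    exact add_nonneg (lnp_nonneg x) (lnp_nonneg y)
  · have hx0 : 0 < x := by
      rcases hx.lt_or_eq with h' | h'
      · exact h'
      · exfalso; rw [← h', zero_mul] at h; linarith
    have hy0 : 0 < y := by
      rcases hy.lt_or_eq with h' | h'
      · exact h'
      · exfalso; rw [← h', mul_zero] at h; linarith
    have : lnp (x * y) = Real.log (x * y) := by rw [lnp, max_eq_left h.le]
    rw [this, Real.log_mul hx0.ne' hy0.ne']
    exact add_le_add (log_le_lnp hx0) (log_le_lnp hy0)

lemma lnp_pow_le (k : ℕ) {z : ℝ} (hz : 1 ≤ z) :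
    lnp z ^ k ≤ (2 * k : ℝ) ^ k * z ^ ((1 : ℝ) / 2) := by
  have hz0 : (0 : ℝ) < z := lt_of_lt_of_le one_pos hz
  have h1 : (1 : ℝ) ≤ z ^ ((1 : ℝ) / 2) := Real.one_le_rpow hz (by norm_num)
  rcases Nat.eq_zero_or_pos k with hk | hk
  · subst hk; simpa using h1
  · have hkR : (0 : ℝ) < (k : ℝ) := by exact_mod_cast hk
    have hl : lnp z = Real.log z := by rw [lnp, max_eq_left hz]
    have hε : (0 : ℝ) < 1 / (2 * k) := by positivity
    have hlog : Real.log z ≤ 2 * k * z ^ ((1 : ℝ) / (2 * k)) := by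
      calc Real.log z ≤ z ^ ((1:ℝ)/(2*k)) / (1/(2*k)) := Real.log_le_rpow_div hz0.le hε
        _ = 2 * k * z ^ ((1 : ℝ) / (2 * k)) := by field_simp
    have hlog0 : 0 ≤ Real.log z := Real.log_nonneg hz
    have hexp : ((1 : ℝ) / (2 * k)) * k = 1 / 2 := by field_simp
    calc lnp z ^ k = Real.log z ^ k := by rw [hl]
      _ ≤ (2 * k * z ^ ((1 : ℝ) / (2 * k))) ^ k := pow_le_pow_left₀ hlog0 hlog k
      _ = (2 * k : ℝ) ^ k * (z ^ ((1 : ℝ) / (2 * k))) ^ k := mul_pow _ _ _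
      _ = (2 * k : ℝ) ^ k * z ^ ((1 : ℝ) / 2) := by
          rw [← Real.rpow_natCast (z ^ ((1:ℝ)/(2*k))) k, ← Real.rpow_mul hz0.le, hexp]

theorem stmt5 (k : ℕ) :
    ∃ P : Polynomial ℝ, (∀ n, 0 ≤ P.coeff n) ∧
      ∀ a b c K : ℝ, 0 ≤ a → a ≤ b → 0 ≤ c → 0 ≤ K → 0 < max c a →
        ∫ x in a..b, (max c x)⁻¹ * lnp (K / x) ^ k ≤
          P.eval (lnp (max K b / max c a)) := by
  classical
  refine ⟨Polynomial.C ((2 * k : ℝ) ^ k * 2 ^ (k + 1)) +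
      Polynomial.C ((2 : ℝ) ^ (k + 1)) * Polynomial.X ^ k + Polynomial.X ^ (k + 1), ?_, ?_⟩
  · intro n
    simp only [Polynomial.coeff_add, Polynomial.coeff_C, Polynomial.coeff_C_mul,
      Polynomial.coeff_X_pow]
    split_ifs <;> simp <;> positivity
  · intro a b c K ha hab hc hK hm
    set m : ℝ := max c a with hm_def
    set L : ℝ := lnp (max K b / m) with hL_def
    have hL : 0 ≤ L := lnp_nonneg _
    have ham : a ≤ m := le_max_right _ _
    have hcm : c ≤ m := le_max_left _ _
    have hb0 : 0 ≤ b := le_trans ha hab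
    rw [Polynomial.eval_add, Polynomial.eval_add, Polynomial.eval_C, Polynomial.eval_mul,
      Polynomial.eval_C, Polynomial.eval_pow, Polynomial.eval_pow, Polynomial.eval_X]
    set d : ℝ := min m b with hd_def
    have had : a ≤ d := le_min ham hab
    have hdb : d ≤ b := min_le_right _ _
    have hdm : d ≤ m := min_le_left _ _
    set s : ℝ := (1 : ℝ) / 2 with hs_def
    set r : ℝ := -s with hr_def
    have hrs : r + s = 0 := by rw [hr_def]; ring
    have hmr0 : 0 ≤ m ^ r := Real.rpow_nonneg hm.le r
    have hms0 : 0 ≤ m ^ s := Real.rpow_nonneg hm.le s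
    have hm1 : m ^ r * m ^ r = m⁻¹ := by
      rw [← Real.rpow_add hm, hr_def, hs_def,
        show (-(1/2 : ℝ) + -(1/2 : ℝ)) = -1 by norm_num, Real.rpow_neg_one]
    have hm4 : m ^ r * m ^ s = 1 := by
      rw [← Real.rpow_add hm, hrs, Real.rpow_zero]
    set B : ℝ := 2 ^ k * (L ^ k + (2 * k : ℝ) ^ k) * m ^ r with hB_def
    have hB0 : 0 ≤ B := by positivity
    set h : ℝ → ℝ := fun x => if x ≤ d then B * x ^ r else L ^ k * x⁻¹ with hh_def
    set f : ℝ → ℝ := fun x => (max c x)⁻¹ * lnp (K / x) ^ k with hf_def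
    -- pointwise bound
    have key : ∀ x ∈ Set.Ioc a b, f x ≤ h x := by
      intro x hx
      have hx0 : 0 < x := lt_of_le_of_lt ha hx.1
      have hmcx : m ≤ max c x := max_le_max le_rfl hx.1.le
      have hcx0 : 0 < max c x := lt_of_lt_of_le hm hmcx
      have hKmL : lnp (K / m) ≤ L := lnp_mono (by gcongr; exact le_max_left _ _)
      by_cases hxd : x ≤ d
      · -- x ≤ m case
        have hxm : x ≤ m := le_trans hxd hdm
        have hmx1 : (1 : ℝ) ≤ m / x := (one_le_div hx0).2 hxm
        have hxr0 : 0 ≤ x ^ r := Real.rpow_nonneg hx0.le r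
        set M : ℝ := lnp (m / x) with hM_def
        have hM0 : 0 ≤ M := lnp_nonneg _
        have h1 : lnp (K / x) ≤ L + M := by
          have hKx : K / x = (K / m) * (m / x) := by field_simp
          rw [hKx]
          refine le_trans (lnp_mul_le (by positivity) (by positivity)) ?_
          exact add_le_add hKmL (le_refl M)
        have h2 : lnp (K / x) ^ k ≤ (L + M) ^ k := pow_le_pow_left₀ (lnp_nonneg _) h1 k
        have h3 : (L + M) ^ k ≤ 2 ^ k * (L ^ k + M ^ k) := by
          calc (L + M) ^ k ≤ (2 * max L M) ^ k := by
                refine pow_le_pow_left₀ (by positivity) ?_ k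
                rcases le_total L M with h' | h'
                · rw [max_eq_right h']; linarith
                · rw [max_eq_left h']; linarith
            _ = 2 ^ k * (max L M) ^ k := mul_pow _ _ _
            _ ≤ 2 ^ k * (L ^ k + M ^ k) := by
                refine mul_le_mul_of_nonneg_left ?_ (by positivity)
                rcases le_total L M with h' | h'
                · rw [max_eq_right h']; nlinarith [pow_nonneg hL k]
                · rw [max_eq_left h']; nlinarith [pow_nonneg hM0 k]
        have h4 : M ^ k ≤ (2 * k : ℝ) ^ k * (m / x) ^ s := lnp_pow_le k hmx1
        have e2 : m ^ r ≤ x ^ r :=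
          Real.rpow_le_rpow_of_nonpos hx0 hxm (by rw [hr_def, hs_def]; norm_num)
        have e3 : (m / x) ^ s = m ^ s * x ^ r := by
          rw [Real.div_rpow hm.le hx0.le, div_eq_mul_inv, ← Real.rpow_neg hx0.le]
        have key2 : m⁻¹ * (m / x) ^ s = m ^ r * x ^ r := by
          calc m⁻¹ * (m / x) ^ s = (m ^ r * m ^ r) * (m ^ s * x ^ r) := by rw [hm1, e3]
            _ = (m ^ r * m ^ s) * (m ^ r * x ^ r) := by ring
            _ = m ^ r * x ^ r := by rw [hm4, one_mul]
        have hinv : m⁻¹ ≤ m ^ r * x ^ r := by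
          rw [← hm1]; exact mul_le_mul_of_nonneg_left e2 hmr0
        have hhx : h x = B * x ^ r := if_pos hxd
        rw [hhx]
        calc f x = (max c x)⁻¹ * lnp (K / x) ^ k := rfl
          _ ≤ m⁻¹ * lnp (K / x) ^ k := by
              gcongr
              exact pow_nonneg (lnp_nonneg _) k
          _ ≤ m⁻¹ * (2 ^ k * (L ^ k + M ^ k)) := by
              refine mul_le_mul_of_nonneg_left (le_trans h2 h3) (by positivity)
          _ ≤ m⁻¹ * (2 ^ k * (L ^ k + (2 * k : ℝ) ^ k * (m / x) ^ s)) := by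
              gcongr
          _ = 2 ^ k * L ^ k * m⁻¹ + 2 ^ k * (2 * k : ℝ) ^ k * (m⁻¹ * (m / x) ^ s) := by ring
          _ ≤ 2 ^ k * L ^ k * (m ^ r * x ^ r) +
              2 ^ k * (2 * k : ℝ) ^ k * (m ^ r * x ^ r) := by
              rw [key2]
              gcongr
          _ = B * x ^ r := by rw [hB_def]; ring
      · -- x > m case
        have hxm : m < x := by
          rcases min_lt_iff.mp (not_le.1 hxd) with h' | h'
          · exact h'
          · exact absurd hx.2 (not_le.2 h')
        have hmax : max c x = x := max_eq_right (le_trans hcm hxm.le)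
        have hKxL : lnp (K / x) ≤ L := by
          refine le_trans (lnp_mono ?_) hKmL
          exact div_le_div_of_nonneg_left hK hm hxm.le
        have hhx : h x = L ^ k * x⁻¹ := if_neg hxd
        rw [hhx]
        calc f x = x⁻¹ * lnp (K / x) ^ k := by rw [hf_def]; simp [hmax]
          _ ≤ x⁻¹ * L ^ k :=
              mul_le_mul_of_nonneg_left (pow_le_pow_left₀ (lnp_nonneg _) hKxL k)
                (inv_nonneg.2 hx0.le)
          _ = L ^ k * x⁻¹ := by ring
    -- first piece
    have hI1int : IntegrableOn (fun x => B * x ^ r) (Set.Ioc a d) volume := by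
      rw [← intervalIntegrable_iff_integrableOn_Ioc_of_le had]
      exact (intervalIntegral.intervalIntegrable_rpow'
        (by rw [hr_def, hs_def]; norm_num)).const_mul B
    have hI1val : ∫ x in Set.Ioc a d, B * x ^ r ≤ 2 ^ (k + 1) * (L ^ k + (2 * k : ℝ) ^ k) := by
      have hcomp : ∫ x in a..d, x ^ r = (d ^ (r + 1) - a ^ (r + 1)) / (r + 1) :=
        integral_rpow (Or.inl (by rw [hr_def, hs_def]; norm_num))
      have hr1 : r + 1 = s := by rw [hr_def, hs_def]; norm_num
      have hds : d ^ s ≤ m ^ s :=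
        Real.rpow_le_rpow (le_trans ha had) hdm (by rw [hs_def]; norm_num)
      have has0 : 0 ≤ a ^ s := Real.rpow_nonneg ha s
      have : ∫ x in Set.Ioc a d, B * x ^ r = B * ((d ^ s - a ^ s) / s) := by
        rw [← intervalIntegral.integral_of_le had, intervalIntegral.integral_const_mul,
          hcomp, hr1]
      rw [this]
      have hstep : B * ((d ^ s - a ^ s) / s) ≤ B * (2 * m ^ s) := by
        refine mul_le_mul_of_nonneg_left ?_ hB0
        rw [hs_def]
        rw [hs_def] at hds has0
        nlinarith
      refine le_trans hstep ?_
      have : B * (2 * m ^ s) = 2 ^ (k + 1) * (L ^ k + (2 * k : ℝ) ^ k) * (m ^ r * m ^ s) := by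
        rw [hB_def]; ring
      rw [this, hm4, mul_one, pow_succ]
    have hI1 : ∫ x in Set.Ioc a d, h x ≤ 2 ^ (k + 1) * (L ^ k + (2 * k : ℝ) ^ k) := by
      rw [setIntegral_congr_fun measurableSet_Ioc (fun x hx => if_pos hx.2)]
      exact hI1val
    have hI1int' : IntegrableOn h (Set.Ioc a d) volume := by
      refine (integrableOn_congr_fun (fun x hx => ?_) measurableSet_Ioc).2 hI1int
      exact if_pos hx.2
    -- second piece
    have hI2pair : IntegrableOn h (Set.Ioc d b) volume ∧
        ∫ x in Set.Ioc d b, h x ≤ L ^ (k + 1) := by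
      by_cases hbm : b ≤ m
      · have hdb' : d = b := min_eq_right hbm
        rw [hdb']
        simp only [Set.Ioc_self]
        constructor
        · exact integrableOn_empty
        · rw [MeasureTheory.setIntegral_empty]
          positivity
      · have hmb : m < b := not_le.1 hbm
        have hdm' : d = m := min_eq_left hmb.le
        have hd0 : 0 < d := by rw [hdm']; exact hm
        have hint : IntegrableOn (fun x => L ^ k * x⁻¹) (Set.Ioc d b) volume := by
          rw [← intervalIntegrable_iff_integrableOn_Ioc_of_le hdb]
          refine IntervalIntegrable.const_mul ?_ _
          refine intervalIntegral.intervalIntegrable_inv (fun x hx => ?_) continuousOn_id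
          have := hx.1
          rw [min_eq_left (hdb)] at this
          exact (lt_of_lt_of_le hd0 this).ne'
        have hcong : Set.EqOn h (fun x => L ^ k * x⁻¹) (Set.Ioc d b) :=
          fun x hx => if_neg (not_le.2 hx.1)
        constructor
        · exact (integrableOn_congr_fun hcong measurableSet_Ioc).2 hint
        · rw [setIntegral_congr_fun measurableSet_Ioc hcong]
          have hval : ∫ x in Set.Ioc d b, L ^ k * x⁻¹ = L ^ k * Real.log (b / d) := by
            rw [← intervalIntegral.integral_of_le hdb, intervalIntegral.integral_const_mul,
              integral_inv_of_pos hd0 (lt_trans hd0 (by rw [hdm']; exact hmb))]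
          rw [hval]
          have hlog : Real.log (b / d) ≤ L := by
            rw [hdm']
            refine le_trans (log_le_lnp (div_pos (lt_trans hm hmb) hm)) (lnp_mono ?_)
            gcongr
            exact le_max_right _ _
          calc L ^ k * Real.log (b / d) ≤ L ^ k * L :=
                mul_le_mul_of_nonneg_left hlog (by positivity)
            _ = L ^ (k + 1) := by ring
    -- combine
    have hunion : Set.Ioc a d ∪ Set.Ioc d b = Set.Ioc a b := Set.Ioc_union_Ioc_eq_Ioc had hdb
    have hhint : IntegrableOn h (Set.Ioc a b) volume := by
      rw [← hunion]
      exact hI1int'.union hI2pair.1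
    have hsplit : ∫ x in Set.Ioc a b, h x =
        (∫ x in Set.Ioc a d, h x) + ∫ x in Set.Ioc d b, h x := by
      rw [← hunion]
      exact setIntegral_union (Set.Ioc_disjoint_Ioc_of_le le_rfl) measurableSet_Ioc hI1int' hI2pair.1
    have hf0 : ∀ x, 0 ≤ f x := fun x =>
      mul_nonneg (inv_nonneg.2 (le_trans hc (le_max_left c x))) (pow_nonneg (lnp_nonneg _) k)
    have hmono : ∫ x in Set.Ioc a b, f x ≤ ∫ x in Set.Ioc a b, h x := by
      refine integral_mono_of_nonneg (Filter.Eventually.of_forall hf0) hhint ?_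
      exact (ae_restrict_iff' measurableSet_Ioc).2 (Filter.Eventually.of_forall key)
    rw [intervalIntegral.integral_of_le hab]
    calc ∫ x in Set.Ioc a b, f x ≤ ∫ x in Set.Ioc a b, h x := hmono
      _ = (∫ x in Set.Ioc a d, h x) + ∫ x in Set.Ioc d b, h x := hsplit
      _ ≤ 2 ^ (k + 1) * (L ^ k + (2 * k : ℝ) ^ k) + L ^ (k + 1) := add_le_add hI1 hI2pair.2
      _ ≤ (2 * k : ℝ) ^ k * 2 ^ (k + 1) + 2 ^ (k + 1) * L ^ k + L ^ (k + 1) := by ring_nf; exact le_rfl
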